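/- Let a, b, c be positive integers with b ≥ 2 and a² ≤ c·b², and let f(x) = (c − x)·((a − x)² + b²) + 1. Let ω₂ be a nonreal root of f. Then |ω₂|² ≥ a² + b² − 1. -/

import Mathlib

lemma core_ineq (A B C s t : ℝ) (hA1 : 1 ≤ A) (hB : 2 ≤ B) (hC : 1 ≤ C)
    (habc : A^2 ≤ C*B^2)
    (hE : (A-s)^2 - t^2 + B^2 + 2*(C-s)*(A-s) = 0)
    (hR : 2*(A-s)*((C-s)^2+t^2) = 1) :
    A^2 + B^2 - 1 ≤ s^2 + t^2 := by
  have hu : 0 < A - s := by nlinarith [sq_nonneg (C-s), sq_nonneg t]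
  have key : 2*s - C ≤ (C + A - 2*s)^2 + B^2 := by
    rcases le_or_gt (2*s - C) 0 with h | h
    · nlinarith [sq_nonneg (C+A-2*s)]
    · nlinarith [sq_nonneg (A - (2*s-C)), sq_nonneg (B^2 - A), sq_nonneg (2*(2*s-C) - 2*A - 1), mul_pos h h, sq_nonneg (A*(B^2-A) - (2*s-C)*B^2)]
  nlinarith [mul_le_mul_of_nonneg_left key (by linarith : (0:ℝ) ≤ 2*(A-s))]

theorem nonreal_root_modulus_lower_bound (a b c : ℕ) (ha : 0 < a) (hb : 2 ≤ b) (hc : 0 < c)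
    (habc : (a : ℝ) ^ 2 ≤ (c : ℝ) * (b : ℝ) ^ 2)
    (f : ℂ → ℂ)
    (hf : f = fun x => ((c : ℂ) - x) * (((a : ℂ) - x) ^ 2 + (b : ℂ) ^ 2) + 1)
    (ω₂ : ℂ) (hω₂ : f ω₂ = 0) (him : ω₂.im ≠ 0) :
    (a : ℝ) ^ 2 + (b : ℝ) ^ 2 - 1 ≤ ‖ω₂‖ ^ 2 := by
  subst hf
  simp only at hω₂
  obtain ⟨hre, him0⟩ := Complex.ext_iff.mp hω₂
  simp only [Complex.add_re, Complex.add_im, Complex.mul_re, Complex.mul_im, Complex.sub_re,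
    Complex.sub_im, Complex.one_re, Complex.one_im, Complex.zero_re,
    Complex.zero_im, Complex.natCast_re, Complex.natCast_im, pow_two] at hre him0
  have hA1 : 1 ≤ (a:ℝ) := by exact_mod_cast ha
  have hB : 2 ≤ (b:ℝ) := by exact_mod_cast hb
  have hC : 1 ≤ (c:ℝ) := by exact_mod_cast hc
  have habs : ‖ω₂‖ ^ 2 = ω₂.re^2 + ω₂.im^2 := by
    rw [Complex.sq_norm, Complex.normSq_apply]; ring
  rw [habs]
  have hE' : ω₂.im * (((a:ℝ)-ω₂.re)^2 - ω₂.im^2 + (b:ℝ)^2 + 2*((c:ℝ)-ω₂.re)*((a:ℝ)-ω₂.re)) = 0 := by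
    linear_combination -him0
  have hE := (mul_eq_zero.mp hE').resolve_left him
  have hR : 2*((a:ℝ)-ω₂.re)*(((c:ℝ)-ω₂.re)^2+ω₂.im^2) = 1 := by
    linear_combination ((c:ℝ)-ω₂.re)*hE - hre
  exact core_ineq _ _ _ _ _ hA1 hB hC habc hE hR
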